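/- Let G and H be finite simple graphs (the case G = H is allowed) and run color refinement on their disjoint union with the uniform initial coloring. Then for every x ∈ V(G), x' ∈ V(H) and every nonnegative integer k: if w_k^G(x) ≠ w_k^H(x'), then C_k(x) ≠ C_k(x'). Equivalently, C_k(x) = C_k(x') implies w_k^G(x) = w_k^H(x'). -/

import Mathlib

/-- The type of colors produced after `k` rounds of color refinement. -/
def CRColor : ℕ → Type
  | 0 => Unit
  | k + 1 => CRColor k × Multiset (CRColor k)

/-- The color refinement coloring after `k` rounds: `C 0` is constant, and
`C (k+1) x = (C k x, {{C k y : y ∈ N(x)}})`. -/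
noncomputable def crColoring {V : Type*} [Fintype V] (G : SimpleGraph V) :
    (k : ℕ) → V → CRColor k
  | 0 => fun _ => ()
  | k + 1 => fun x =>
      (crColoring G k x, ((G.neighborSet x).toFinite.toFinset.val).map (crColoring G k))

/-- `walkCount G k x` is the number of walks of length `k` in `G` starting at `x`. -/
noncomputable def walkCount {V : Type*} (G : SimpleGraph V) (k : ℕ) (x : V) : ℕ :=
  Nat.card {p : (y : V) × G.Walk x y // p.2.length = k}

lemma walkCount_zero {V : Type*} (G : SimpleGraph V) (x : V) : walkCount G 0 x = 1 := by
  rw [walkCount, Nat.card_eq_one_iff_unique]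
  refine ⟨⟨?_⟩, ⟨⟨⟨x, .nil⟩, rfl⟩⟩⟩
  rintro ⟨⟨y, w⟩, h⟩ ⟨⟨y', w'⟩, h'⟩
  cases w with
  | cons _ _ => simp at h
  | nil =>
    cases w' with
    | cons _ _ => simp at h'
    | nil => rfl

def walkSigmaEquiv {V : Type*} (G : SimpleGraph V) (x : V) (k : ℕ) :
    {p : (y : V) × G.Walk x y // p.2.length = k} ≃
      Σ y : V, {w : G.Walk x y // w.length = k} :=
  ⟨fun p => ⟨p.1.1, p.1.2, p.2⟩, fun q => ⟨⟨q.1, q.2.1⟩, q.2.2⟩,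
    fun _ => rfl, fun _ => rfl⟩

noncomputable instance {V : Type*} [Fintype V] (G : SimpleGraph V) (x : V) (k : ℕ) :
    Fintype {p : (y : V) × G.Walk x y // p.2.length = k} := by
  classical exact Fintype.ofEquiv _ (walkSigmaEquiv G x k).symm

lemma walkCount_succ {V : Type*} [Fintype V] (G : SimpleGraph V) (x : V) (k : ℕ) :
    walkCount G (k + 1) x =
      ((G.neighborSet x).toFinite.toFinset.val.map (walkCount G k)).sum := by
  classical
  have e : ((z : G.neighborSet x) × {p : (y : V) × G.Walk (z : V) y // p.2.length = k}) ≃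
      {p : (y : V) × G.Walk x y // p.2.length = k + 1} := by
    refine Equiv.ofBijective
      (fun q => ⟨⟨q.2.1.1, SimpleGraph.Walk.cons q.1.2 q.2.1.2⟩, by exact congrArg Nat.succ q.2.2⟩ :
        ((z : G.neighborSet x) × {p : (y : V) × G.Walk (z : V) y // p.2.length = k}) →
          {p : (y : V) × G.Walk x y // p.2.length = k + 1}) ⟨?_, ?_⟩
    · rintro ⟨⟨z, hz⟩, ⟨⟨y, w⟩, h⟩⟩ ⟨⟨z', hz'⟩, ⟨⟨y', w'⟩, h'⟩⟩ hq
      have hv := congrArg Subtype.val hq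
      simp only at hv
      injection hv with hv1 hv2
      subst hv1
      rw [heq_eq_eq] at hv2
      injection hv2 with hu hz2 hy hw
      subst hz2
      cases (eq_of_heq hw)
      rfl
    · rintro ⟨⟨y, w⟩, h⟩
      cases w with
      | nil => simp at h
      | cons hadj w' =>
        exact ⟨⟨⟨_, hadj⟩, ⟨⟨y, w'⟩, by simpa using h⟩⟩, rfl⟩
  rw [walkCount, ← Nat.card_congr e, Nat.card_eq_fintype_card, Fintype.card_sigma]
  have : ∀ z : G.neighborSet x,
      Fintype.card {p : (y : V) × G.Walk (z : V) y // p.2.length = k} = walkCount G k z := by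
    intro z; rw [walkCount, Nat.card_eq_fintype_card]
  simp_rw [this]
  rw [show ((G.neighborSet x).toFinite.toFinset.val.map (walkCount G k)).sum
      = ∑ z ∈ (G.neighborSet x).toFinite.toFinset, walkCount G k z from rfl]
  exact (Finset.sum_subtype _ (fun z => Set.Finite.mem_toFinset _) _).symm

lemma cr_eq_imp_walk_eq {V : Type*} [Fintype V] (Γ : SimpleGraph V) :
    ∀ (k : ℕ) (u v : V), crColoring Γ k u = crColoring Γ k v →
      walkCount Γ k u = walkCount Γ k v := by
  intro k
  induction k with
  | zero => intro u v _; rw [walkCount_zero, walkCount_zero]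
  | succ k ih =>
    intro u v h
    classical
    set φ : CRColor k → ℕ := fun c =>
      if hc : ∃ y, crColoring Γ k y = c then walkCount Γ k hc.choose else 0 with hφdef
    have hφ : ∀ y, φ (crColoring Γ k y) = walkCount Γ k y := by
      intro y
      have hy : ∃ z, crColoring Γ k z = crColoring Γ k y := ⟨y, rfl⟩
      simp only [hφdef, dif_pos hy]
      exact ih _ _ hy.choose_spec
    have hm : ((Γ.neighborSet u).toFinite.toFinset.val).map (crColoring Γ k)
        = ((Γ.neighborSet v).toFinite.toFinset.val).map (crColoring Γ k) := by
      have := congrArg Prod.snd h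
      simpa [crColoring] using this
    rw [walkCount_succ, walkCount_succ]
    calc ((Γ.neighborSet u).toFinite.toFinset.val.map (walkCount Γ k)).sum
        = (((Γ.neighborSet u).toFinite.toFinset.val.map (crColoring Γ k)).map φ).sum := by
          rw [Multiset.map_map]
          exact congrArg _ (Multiset.map_congr rfl (fun y _ => (hφ y).symm))
      _ = (((Γ.neighborSet v).toFinite.toFinset.val.map (crColoring Γ k)).map φ).sum := by
          rw [hm]
      _ = ((Γ.neighborSet v).toFinite.toFinset.val.map (walkCount Γ k)).sum := by
          rw [Multiset.map_map]
          exact congrArg _ (Multiset.map_congr rfl (fun y _ => hφ y))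

lemma walkCount_sum_inl {α β : Type} [Fintype α] [Fintype β] (G : SimpleGraph α)
    (H : SimpleGraph β) : ∀ (k : ℕ) (x : α),
    walkCount (G ⊕g H) k (Sum.inl x) = walkCount G k x := by
  intro k
  induction k with
  | zero => intro x; rw [walkCount_zero, walkCount_zero]
  | succ k ih =>
    intro x
    classical
    rw [walkCount_succ, walkCount_succ]
    have h1 : ((G ⊕g H).neighborSet (Sum.inl x)).toFinite.toFinset
        = (G.neighborSet x).toFinite.toFinset.image Sum.inl := by
      ext z
      cases z <;> simp [SimpleGraph.neighborSet, SimpleGraph.sum]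
    rw [h1, Finset.image_val, Multiset.dedup_eq_self.mpr
      (Multiset.Nodup.map Sum.inl_injective (G.neighborSet x).toFinite.toFinset.nodup),
      Multiset.map_map]
    exact congrArg Multiset.sum (Multiset.map_congr rfl (fun z _ => ih z))

lemma walkCount_sum_inr {α β : Type} [Fintype α] [Fintype β] (G : SimpleGraph α)
    (H : SimpleGraph β) : ∀ (k : ℕ) (x : β),
    walkCount (G ⊕g H) k (Sum.inr x) = walkCount H k x := by
  intro k
  induction k with
  | zero => intro x; rw [walkCount_zero, walkCount_zero]
  | succ k ih =>
    intro x
    classical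
    rw [walkCount_succ, walkCount_succ]
    have h1 : ((G ⊕g H).neighborSet (Sum.inr x)).toFinite.toFinset
        = (H.neighborSet x).toFinite.toFinset.image Sum.inr := by
      ext z
      cases z <;> simp [SimpleGraph.neighborSet, SimpleGraph.sum]
    rw [h1, Finset.image_val, Multiset.dedup_eq_self.mpr
      (Multiset.Nodup.map Sum.inr_injective (H.neighborSet x).toFinite.toFinset.nodup),
      Multiset.map_map]
    exact congrArg Multiset.sum (Multiset.map_congr rfl (fun z _ => ih z))


/-- Run color refinement on the disjoint union of graphs `G` and `H` (possibly equal).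
For vertices `x` of `G` and `x'` of `H` and any `k`: if the walk counts `w_k` of `x` in
`G` and of `x'` in `H` differ, then their colors `C_k` differ; equivalently
`C_k(x) = C_k(x')` implies `w_k^G(x) = w_k^H(x')`. -/
theorem walkCount_ne_implies_crColoring_ne
    {α β : Type} [Fintype α] [Fintype β] (G : SimpleGraph α) (H : SimpleGraph β)
    (x : α) (x' : β) (k : ℕ) :
    (walkCount G k x ≠ walkCount H k x' →
      crColoring (G ⊕g H) k (Sum.inl x) ≠ crColoring (G ⊕g H) k (Sum.inr x')) ∧
    (crColoring (G ⊕g H) k (Sum.inl x) = crColoring (G ⊕g H) k (Sum.inr x') →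
      walkCount G k x = walkCount H k x') := by
  have key : crColoring (G ⊕g H) k (Sum.inl x) = crColoring (G ⊕g H) k (Sum.inr x') →
      walkCount G k x = walkCount H k x' := by
    intro h
    rw [← walkCount_sum_inl G H k x, ← walkCount_sum_inr G H k x']
    exact cr_eq_imp_walk_eq _ k _ _ h
  exact ⟨fun hne hc => hne (key hc), key⟩
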